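/- In Max-Welter, there is no move from a 1-position to a 1-position, where a 1-position is a position (a_1,...,a_k) with k ≥ 2 satisfying either (a) the coins occupy {0,1,...,k} minus one square l+1 with l ≤ k-2, or (b) a_k = a_{k-1}+1 and a_{k-1}+k is odd. -/

import Mathlib

/-- A move in Max-Welter: the coin on the largest occupied square moves to an
empty square strictly to its left. -/
def MWMove (s t : Finset ℕ) : Prop :=
  ∃ (hs : s.Nonempty) (j : ℕ), j < s.max' hs ∧ j ∉ s ∧
    t = insert j (s.erase (s.max' hs))

theorem MWMove.sum_lt {s t : Finset ℕ} (h : MWMove s t) :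
    t.sum id < s.sum id := by
  obtain ⟨hs, j, hj, hjs, rfl⟩ := h
  have hm : s.max' hs ∈ s := s.max'_mem hs
  have hje : j ∉ s.erase (s.max' hs) := fun hc => hjs (Finset.mem_of_mem_erase hc)
  have h2 : (s.erase (s.max' hs)).sum id + s.max' hs = s.sum id :=
    Finset.sum_erase_add s id hm
  rw [Finset.sum_insert hje]
  simp only [id] at *
  omega

/-- Normal-play Sprague-Grundy value of a Max-Welter position. -/
noncomputable def grundy (s : Finset ℕ) : ℕ :=
  sInf {n : ℕ | ∀ t, ∀ _h : MWMove s t, grundy t ≠ n}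
termination_by s.sum id
decreasing_by exact _h.sum_lt

open Classical in
/-- Misère Sprague-Grundy value: terminal positions get value 1. -/
noncomputable def mgrundy (s : Finset ℕ) : ℕ :=
  if ∀ t, ¬ MWMove s t then 1
  else sInf {n : ℕ | ∀ t, ∀ _h : MWMove s t, mgrundy t ≠ n}
termination_by s.sum id
decreasing_by exact _h.sum_lt

/-- Normal play: `s` is a P-position iff every move leads to a non-P-position. -/
def MWPPos (s : Finset ℕ) : Prop :=
  ∀ t, ∀ _h : MWMove s t, ¬ MWPPos t
termination_by s.sum id
decreasing_by exact _h.sum_lt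

/-- Misère play: the player to move wins iff there is no move (the opponent made
the last move and loses), or some move leads to a position losing for the opponent. -/
def MWMisereWin (s : Finset ℕ) : Prop :=
  (∀ t, ¬ MWMove s t) ∨ ∃ t, ∃ _h : MWMove s t, ¬ MWMisereWin t
termination_by s.sum id
decreasing_by exact _h.sum_lt


private lemma mem_le_top {k : ℕ} (hk : 0 < k) {a : Fin k → ℕ} (ha : StrictMono a)
    {x : ℕ} (hx : x ∈ Finset.image a Finset.univ) : x ≤ a ⟨k - 1, by omega⟩ := by
  simp only [Finset.mem_image, Finset.mem_univ, true_and] at hx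
  obtain ⟨i, rfl⟩ := hx
  exact ha.monotone (by rw [Fin.le_def]; have := i.isLt; simp; omega)

private lemma le_second {k : ℕ} (hk : 1 < k) {a : Fin k → ℕ} (ha : StrictMono a)
    {x : ℕ} (hx : x ∈ Finset.image a Finset.univ) (hne : x ≠ a ⟨k - 1, by omega⟩) :
    x ≤ a ⟨k - 2, by omega⟩ := by
  simp only [Finset.mem_image, Finset.mem_univ, true_and] at hx
  obtain ⟨i, rfl⟩ := hx
  have hi : i.val ≠ k - 1 := fun h => hne (congrArg a (Fin.ext h))
  exact ha.monotone (by rw [Fin.le_def]; have := i.isLt; simp; omega)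

private lemma img_max {k : ℕ} (hk : 0 < k) {a : Fin k → ℕ} (ha : StrictMono a)
    (h : (Finset.image a Finset.univ).Nonempty) :
    (Finset.image a Finset.univ).max' h = a ⟨k - 1, by omega⟩ := by
  refine le_antisymm (Finset.max'_le _ _ _ fun y hy => mem_le_top hk ha hy)
    (Finset.le_max' _ _ (Finset.mem_image_of_mem a (Finset.mem_univ _)))

private lemma top_of_eraseq {k l : ℕ} (hk : 1 < k) (hl : l ≤ k - 2) {b : Fin k → ℕ}
    (hb : StrictMono b)
    (heq : Finset.image b Finset.univ = (Finset.range (k + 1)).erase (l + 1)) :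
    b ⟨k - 1, by omega⟩ = k := by
  have h1 : b ⟨k - 1, by omega⟩ ∈ Finset.image b Finset.univ :=
    Finset.mem_image_of_mem b (Finset.mem_univ _)
  rw [heq] at h1
  simp only [Finset.mem_erase, Finset.mem_range] at h1
  have h2 : (k : ℕ) ∈ Finset.image b Finset.univ := by
    rw [heq]; simp only [Finset.mem_erase, Finset.mem_range]; omega
  have := mem_le_top (by omega : 0 < k) hb h2
  omega

/-- there is no move from a 1-position to a 1-position. -/
theorem maxWelter_no_move_one_to_one (k : ℕ) (hk : 2 ≤ k) (a b : Fin k → ℕ)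
    (ha : StrictMono a) (hb : StrictMono b)
    (h1 : (∃ l, l ≤ k - 2 ∧
        Finset.image a Finset.univ = (Finset.range (k + 1)).erase (l + 1)) ∨
      (a ⟨k - 1, by omega⟩ = a ⟨k - 2, by omega⟩ + 1 ∧
        Odd (a ⟨k - 2, by omega⟩ + k)))
    (hmv : MWMove (Finset.image a Finset.univ) (Finset.image b Finset.univ)) :
    ¬ ((∃ l, l ≤ k - 2 ∧
        Finset.image b Finset.univ = (Finset.range (k + 1)).erase (l + 1)) ∨
      (b ⟨k - 1, by omega⟩ = b ⟨k - 2, by omega⟩ + 1 ∧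
        Odd (b ⟨k - 2, by omega⟩ + k))) := by
  intro hcon
  have hk1 : k - 1 < k := by omega
  have hk2 : k - 2 < k := by omega
  obtain ⟨hs, j, hjlt, hjs, hteq⟩ := hmv
  have hmax : (Finset.image a Finset.univ).max' hs = a ⟨k - 1, hk1⟩ :=
    img_max (by omega) ha hs
  rw [hmax] at hjlt hteq
  have hMmem : a ⟨k - 1, hk1⟩ ∈ Finset.image a Finset.univ :=
    Finset.mem_image_of_mem a (Finset.mem_univ _)
  have hmmem : a ⟨k - 2, hk2⟩ ∈ Finset.image a Finset.univ :=
    Finset.mem_image_of_mem a (Finset.mem_univ _)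
  have hmM : a ⟨k - 2, hk2⟩ < a ⟨k - 1, hk1⟩ := by
    apply ha; rw [Fin.lt_def]; simp; omega
  rcases h1 with ⟨l, hl, heq⟩ | ⟨hadj, hodd⟩
  · -- source is type (a): s = {0,...,k} \ {l+1}
    have haK : a ⟨k - 1, hk1⟩ = k := top_of_eraseq hk hl ha heq
    have hjval : j = l + 1 := by
      rw [heq] at hjs
      simp only [Finset.mem_erase, Finset.mem_range, not_and, not_lt] at hjs
      by_cases h : j = l + 1
      · exact h
      · have := hjs h; omega
    have ht : Finset.image b Finset.univ = Finset.range k := by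
      rw [hteq, heq, haK, hjval]
      ext x
      simp only [Finset.mem_insert, Finset.mem_erase, Finset.mem_range]
      omega
    have hb1 : b ⟨k - 1, hk1⟩ = k - 1 := by
      have h1 : b ⟨k - 1, hk1⟩ ∈ Finset.image b Finset.univ :=
        Finset.mem_image_of_mem b (Finset.mem_univ _)
      replace h1 := Finset.mem_range.mp ((Finset.ext_iff.mp ht _).mp h1)
      have h2 : k - 1 ∈ Finset.image b Finset.univ :=
        (Finset.ext_iff.mp ht _).mpr (Finset.mem_range.mpr (by omega))
      have h3 : k - 1 ≤ b ⟨k - 1, hk1⟩ := mem_le_top (by omega) hb h2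
      omega
    have hb2 : b ⟨k - 2, hk2⟩ = k - 2 := by
      have h1 : b ⟨k - 2, hk2⟩ ∈ Finset.image b Finset.univ :=
        Finset.mem_image_of_mem b (Finset.mem_univ _)
      replace h1 := Finset.mem_range.mp ((Finset.ext_iff.mp ht _).mp h1)
      have hlt : b ⟨k - 2, hk2⟩ < b ⟨k - 1, hk1⟩ := by
        apply hb; rw [Fin.lt_def]; simp; omega
      have h3 : k - 2 ∈ Finset.image b Finset.univ :=
        (Finset.ext_iff.mp ht _).mpr (Finset.mem_range.mpr (by omega))
      have h4 : k - 2 ≤ b ⟨k - 2, hk2⟩ := le_second hk hb h3 (by rw [hb1]; omega)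
      omega
    rcases hcon with ⟨l', hl', heq'⟩ | ⟨hadj', hodd'⟩
    · have hkmem : (k : ℕ) ∈ Finset.image b Finset.univ := by
        rw [heq']; simp only [Finset.mem_erase, Finset.mem_range]; omega
      have := Finset.mem_range.mp ((Finset.ext_iff.mp ht _).mp hkmem)
      omega
    · replace hadj' : b ⟨k - 1, hk1⟩ = b ⟨k - 2, hk2⟩ + 1 := hadj'
      replace hodd' : Odd (b ⟨k - 2, hk2⟩ + k) := hodd'
      obtain ⟨c, hc⟩ := hodd'
      omega
  · -- source is type (b): a⟨k-1⟩ = a⟨k-2⟩ + 1 and a⟨k-2⟩ + k odd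
    replace hadj : a ⟨k - 1, hk1⟩ = a ⟨k - 2, hk2⟩ + 1 := hadj
    replace hodd : Odd (a ⟨k - 2, hk2⟩ + k) := hodd
    have hj2 : j ≠ a ⟨k - 2, hk2⟩ := fun h => hjs (h ▸ hmmem)
    have hmt : a ⟨k - 2, hk2⟩ ∈ Finset.image b Finset.univ := by
      rw [hteq]
      exact Finset.mem_insert_of_mem (Finset.mem_erase.mpr ⟨by omega, hmmem⟩)
    have hmle : a ⟨k - 2, hk2⟩ ≤ b ⟨k - 1, hk1⟩ := mem_le_top (by omega) hb hmt
    have hbtop : b ⟨k - 1, hk1⟩ = a ⟨k - 2, hk2⟩ := by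
      have h1 : b ⟨k - 1, hk1⟩ ∈ Finset.image b Finset.univ :=
        Finset.mem_image_of_mem b (Finset.mem_univ _)
      rw [hteq] at h1
      rcases Finset.mem_insert.mp h1 with h1 | h1
      · omega
      · obtain ⟨hne, hmem⟩ := Finset.mem_erase.mp h1
        have hle : b ⟨k - 1, hk1⟩ ≤ a ⟨k - 2, hk2⟩ := le_second hk ha hmem hne
        omega
    rcases hcon with ⟨l', hl', heq'⟩ | ⟨hadj', hodd'⟩
    · have hbk : b ⟨k - 1, hk1⟩ = k := top_of_eraseq hk hl' hb heq'
      obtain ⟨c, hc⟩ := hodd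
      omega
    · replace hadj' : b ⟨k - 1, hk1⟩ = b ⟨k - 2, hk2⟩ + 1 := hadj'
      replace hodd' : Odd (b ⟨k - 2, hk2⟩ + k) := hodd'
      obtain ⟨c, hc⟩ := hodd
      obtain ⟨d, hd⟩ := hodd'
      omega
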